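/- The dimension of W, the linear span in ℝ^E of the set of vectors induced by No-Signalling empirical models, is at most D := Σ_{V ∈ Σ} (l−1)^{|V|}, where Σ is the set of partial contexts. -/

import Mathlib

open Finset

noncomputable section

/-- Restriction of a global assignment `ω : X → O` to a context `U`. -/
def restr {X O : Type} (U : Finset X) (ω : X → O) : {x // x ∈ U} → O :=
  fun x => ω x.1

/-- Restriction of a section on `U` along a subset inclusion `V ⊆ U`. -/
def restrSec {X O : Type} {U V : Finset X} (h : V ⊆ U)
    (t : {x // x ∈ U} → O) : {x // x ∈ V} → O :=
  fun x => t ⟨x.1, h x.2⟩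

/-- The total weight `e(U)` of a context `U` under the table `e`. -/
def eCtx {X O : Type} [Fintype X] [DecidableEq X] [Fintype O] [DecidableEq O]
    (𝒰 : Finset (Finset X))
    (e : (U : {U // U ∈ 𝒰}) → ({x // x ∈ U.1} → O) → ℝ)
    (U : {U // U ∈ 𝒰}) : ℝ :=
  ∑ s : {x // x ∈ U.1} → O, e U s

/-- `e` is an empirical model over the cover `𝒰`: it is a nonnegative table of
total mass one, assigning positive weight to every context. -/
def IsEmpirical {X O : Type} [Fintype X] [DecidableEq X] [Fintype O] [DecidableEq O]
    (𝒰 : Finset (Finset X))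
    (e : (U : {U // U ∈ 𝒰}) → ({x // x ∈ U.1} → O) → ℝ) : Prop :=
  (∀ U s, 0 ≤ e U s) ∧
  (∑ U : {U // U ∈ 𝒰}, eCtx 𝒰 e U = 1) ∧
  (∀ U : {U // U ∈ 𝒰}, 0 < eCtx 𝒰 e U)

/-- The conditional probability `e_U(s) = e(U,s)/e(U)`. -/
def eCond {X O : Type} [Fintype X] [DecidableEq X] [Fintype O] [DecidableEq O]
    (𝒰 : Finset (Finset X))
    (e : (U : {U // U ∈ 𝒰}) → ({x // x ∈ U.1} → O) → ℝ)
    (U : {U // U ∈ 𝒰}) (s : {x // x ∈ U.1} → O) : ℝ :=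
  e U s / eCtx 𝒰 e U

/-- The No-Signalling condition: for any two contexts, the two conditional
distributions have the same marginal on the intersection. -/
def NoSignalling {X O : Type} [Fintype X] [DecidableEq X] [Fintype O] [DecidableEq O]
    (𝒰 : Finset (Finset X))
    (e : (U : {U // U ∈ 𝒰}) → ({x // x ∈ U.1} → O) → ℝ) : Prop :=
  ∀ U U' : {U // U ∈ 𝒰}, ∀ s : {x // x ∈ U.1 ∩ U'.1} → O,
    (∑ t : {x // x ∈ U.1} → O,
      if restrSec (V := U.1 ∩ U'.1) (fun _ hx => (Finset.mem_inter.mp hx).1) t = s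
        then eCond 𝒰 e U t else 0) =
    (∑ t' : {x // x ∈ U'.1} → O,
      if restrSec (V := U.1 ∩ U'.1) (fun _ hx => (Finset.mem_inter.mp hx).2) t' = s
        then eCond 𝒰 e U' t' else 0)

/-- Marginal of an schv model on global assignments. -/
def mOmega {X O : Type} [Fintype X] [DecidableEq X] [Fintype O] [DecidableEq O]
    (𝒰 : Finset (Finset X)) (m : (X → O) → {U // U ∈ 𝒰} → ℝ) (ω : X → O) : ℝ :=
  ∑ U : {U // U ∈ 𝒰}, m ω U

/-- Marginal of an schv model on contexts. -/
def mCtx {X O : Type} [Fintype X] [DecidableEq X] [Fintype O] [DecidableEq O]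
    (𝒰 : Finset (Finset X)) (m : (X → O) → {U // U ∈ 𝒰} → ℝ) (U : {U // U ∈ 𝒰}) : ℝ :=
  ∑ ω : X → O, m ω U

/-- `m` is a signed canonical hidden-variable model: a signed measure of total mass one
on `Ω × 𝒰`. -/
def IsSchv {X O : Type} [Fintype X] [DecidableEq X] [Fintype O] [DecidableEq O]
    (𝒰 : Finset (Finset X)) (m : (X → O) → {U // U ∈ 𝒰} → ℝ) : Prop :=
  ∑ ω : X → O, ∑ U : {U // U ∈ 𝒰}, m ω U = 1

/-- Lambda-Independence: `m` factors as the product of its two marginals. -/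
def LambdaIndep {X O : Type} [Fintype X] [DecidableEq X] [Fintype O] [DecidableEq O]
    (𝒰 : Finset (Finset X)) (m : (X → O) → {U // U ∈ 𝒰} → ℝ) : Prop :=
  ∀ ω U, m ω U = mOmega 𝒰 m ω * mCtx 𝒰 m U

/-- The canonical hidden-variable model `m` realizes the empirical table `e`. -/
def Realizes {X O : Type} [Fintype X] [DecidableEq X] [Fintype O] [DecidableEq O]
    (𝒰 : Finset (Finset X)) (m : (X → O) → {U // U ∈ 𝒰} → ℝ)
    (e : (U : {U // U ∈ 𝒰}) → ({x // x ∈ U.1} → O) → ℝ) : Prop :=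
  ∀ (U : {U // U ∈ 𝒰}) (s : {x // x ∈ U.1} → O),
    e U s = ∑ ω : X → O, if restr U.1 ω = s then m ω U else 0

/-- The linear map `L : ℝ^Ω → ℝ^E`. -/
def Lmap {X O : Type} [Fintype X] [DecidableEq X] [Fintype O] [DecidableEq O]
    (𝒰 : Finset (Finset X)) (v : (X → O) → ℝ) :
    (Σ U : {U // U ∈ 𝒰}, ({x // x ∈ U.1} → O)) → ℝ :=
  fun p => ∑ ω : X → O, if restr p.1.1 ω = p.2 then v ω else 0

/-- The vector in `ℝ^E` induced by an empirical table `e`. -/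
def indVec {X O : Type} [Fintype X] [DecidableEq X] [Fintype O] [DecidableEq O]
    (𝒰 : Finset (Finset X))
    (e : (U : {U // U ∈ 𝒰}) → ({x // x ∈ U.1} → O) → ℝ) :
    (Σ U : {U // U ∈ 𝒰}, ({x // x ∈ U.1} → O)) → ℝ :=
  fun p => eCond 𝒰 e p.1 p.2

section AuxNS

variable {X : Type} [Fintype X] [DecidableEq X] {l : ℕ}

/-- Marginal of a table on sections of `U` to a subset `V`. -/
def marg {U V : Finset X} (h : V ⊆ U) (d : ({x // x ∈ U} → Fin l) → ℝ)
    (t : {x // x ∈ V} → Fin l) : ℝ :=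
  ∑ r : {x // x ∈ U} → Fin l, if restrSec h r = t then d r else 0

lemma marg_comp {V I U : Finset X} (hVI : V ⊆ I) (hIU : I ⊆ U)
    (d : ({x // x ∈ U} → Fin l) → ℝ) (t : {x // x ∈ V} → Fin l) :
    marg hVI (marg hIU d) t = marg (hVI.trans hIU) d t := by
  classical
  unfold marg
  have step : ∀ u : {x // x ∈ I} → Fin l,
      (if restrSec hVI u = t then
        ∑ r : {x // x ∈ U} → Fin l, (if restrSec hIU r = u then d r else 0) else 0)
      = ∑ r : {x // x ∈ U} → Fin l,
          (if restrSec hIU r = u then (if restrSec hVI u = t then d r else 0) else 0) := by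
    intro u
    split_ifs with h1
    · rfl
    · simp [h1]
  rw [Finset.sum_congr rfl fun u _ => step u, Finset.sum_comm]
  refine Finset.sum_congr rfl fun r _ => ?_
  rw [Finset.sum_ite_eq]
  simp only [Finset.mem_univ, if_true]
  rfl

lemma marg_NS {𝒰 : Finset (Finset X)} {e : (U : {U // U ∈ 𝒰}) → ({x // x ∈ U.1} → Fin l) → ℝ}
    (hNS : NoSignalling 𝒰 e) (U U' : {U // U ∈ 𝒰}) {V : Finset X}
    (h : V ⊆ U.1) (h' : V ⊆ U'.1) (t : {x // x ∈ V} → Fin l) :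
    marg h (eCond 𝒰 e U) t = marg h' (eCond 𝒰 e U') t := by
  have hVI : V ⊆ U.1 ∩ U'.1 := Finset.subset_inter h h'
  rw [show h = hVI.trans (fun _ hx => (Finset.mem_inter.mp hx).1) from rfl,
    show h' = hVI.trans (fun _ hx => (Finset.mem_inter.mp hx).2) from rfl,
    ← marg_comp hVI (fun _ hx => (Finset.mem_inter.mp hx).1) (eCond 𝒰 e U) t,
    ← marg_comp hVI (fun _ hx => (Finset.mem_inter.mp hx).2) (eCond 𝒰 e U') t]
  unfold marg
  exact Finset.sum_congr rfl fun u _ => by rw [hNS U U' u]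

open Classical in
noncomputable def wt (𝒰 : Finset (Finset X))
    (e : (U : {U // U ∈ 𝒰}) → ({x // x ∈ U.1} → Fin l) → ℝ)
    (p : Σ V : Finset X, ({x // x ∈ V} → Fin l)) : ℝ :=
  if h : ∃ U ∈ 𝒰, p.1 ⊆ U then
    marg h.choose_spec.2 (eCond 𝒰 e ⟨h.choose, h.choose_spec.1⟩) p.2
  else 0

lemma wt_eq {𝒰 : Finset (Finset X)} {e : (U : {U // U ∈ 𝒰}) → ({x // x ∈ U.1} → Fin l) → ℝ}
    (hNS : NoSignalling 𝒰 e) (U : {U // U ∈ 𝒰})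
    {p : Σ V : Finset X, ({x // x ∈ V} → Fin l)} (h : p.1 ⊆ U.1) :
    wt 𝒰 e p = marg h (eCond 𝒰 e U) p.2 := by
  have hex : ∃ U' ∈ 𝒰, p.1 ⊆ U' := ⟨U.1, U.2, h⟩
  rw [wt, dif_pos hex]
  exact marg_NS hNS ⟨hex.choose, hex.choose_spec.1⟩ U hex.choose_spec.2 h p.2

open Classical in
noncomputable def coeff (o₀ : Fin l) (U : Finset X) (s : {x // x ∈ U} → Fin l)
    (p : Σ V : Finset X, ({x // x ∈ V} → Fin l)) : ℝ :=
  if h : p.1 ⊆ U then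
    if (∀ x : {x // x ∈ U}, s x ≠ o₀ → x.1 ∈ p.1) ∧
       (∀ x : {x // x ∈ p.1}, restrSec h s x ≠ o₀ → p.2 x = restrSec h s x)
    then (-1 : ℝ) ^ (Finset.univ.filter (fun x : {x // x ∈ p.1} => restrSec h s x = o₀)).card
    else 0
  else 0

open Classical in
noncomputable def goodT (o₀ : Fin l) (V : Finset X) : Finset ({x // x ∈ V} → Fin l) :=
  Finset.univ.filter (fun t => ∀ x, t x ≠ o₀)

open Classical in
noncomputable def pairS (o₀ : Fin l) (𝒰 : Finset (Finset X)) :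
    Finset (Σ V : Finset X, ({x // x ∈ V} → Fin l)) :=
  (Finset.univ.filter (fun V : Finset X => ∃ U ∈ 𝒰, V ⊆ U)).sigma (fun V => goodT o₀ V)

lemma goodT_card (o₀ : Fin l) (V : Finset X) : (goodT o₀ V).card = (l - 1) ^ V.card := by
  classical
  have h1 : (goodT o₀ V).card = Fintype.card {t : {x // x ∈ V} → Fin l // ∀ x, t x ≠ o₀} := by
    rw [Fintype.card_subtype]
    unfold goodT
    congr 1
  rw [h1, Fintype.card_congr (Equiv.subtypePiEquivPi (p := fun _ o => o ≠ o₀))]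
  have h2 : Fintype.card {o : Fin l // o ≠ o₀} = l - 1 := by
    have := Fintype.card_subtype_compl (fun o : Fin l => o = o₀)
    simp only [Fintype.card_subtype_eq, Fintype.card_fin] at this
    convert this using 2
  rw [Fintype.card_pi]
  simp [h2, Finset.prod_const]

end AuxNS


lemma comb {X : Type} [DecidableEq X] (𝒱 : Finset (Finset X)) (A A' : Finset X)
    (hAA : A ⊆ A') (hcont : ∀ V, A ⊆ V → V ⊆ A' → V ∈ 𝒱) :
    ∑ V ∈ 𝒱, (if A ⊆ V ∧ V ⊆ A' then (-1 : ℝ) ^ ((V \ A).card) else 0) =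
      if A' ⊆ A then 1 else 0 := by
  classical
  rw [← Finset.sum_filter]
  have hset : 𝒱.filter (fun V => A ⊆ V ∧ V ⊆ A') =
      (A'.powerset).filter (fun V => A ⊆ V) := by
    ext V
    simp only [Finset.mem_filter, Finset.mem_powerset]
    constructor
    · rintro ⟨-, h1, h2⟩; exact ⟨h2, h1⟩
    · rintro ⟨h2, h1⟩; exact ⟨hcont V h1 h2, h1, h2⟩
  rw [hset]
  have hbij : ∑ V ∈ (A'.powerset).filter (fun V => A ⊆ V), (-1 : ℝ) ^ ((V \ A).card) =
      ∑ B ∈ (A' \ A).powerset, (-1 : ℝ) ^ B.card := by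
    refine Finset.sum_bij' (fun V _ => V \ A) (fun B _ => A ∪ B) ?_ ?_ ?_ ?_ ?_
    · intro V hV
      simp only [Finset.mem_filter, Finset.mem_powerset] at hV ⊢
      exact Finset.sdiff_subset_sdiff hV.1 (le_refl A)
    · intro B hB
      simp only [Finset.mem_filter, Finset.mem_powerset] at hB ⊢
      exact ⟨Finset.union_subset hAA ((hB.trans (Finset.sdiff_subset))), Finset.subset_union_left⟩
    · intro V hV
      simp only [Finset.mem_filter, Finset.mem_powerset] at hV
      exact Finset.union_sdiff_of_subset hV.2
    · intro B hB
      simp only [Finset.mem_powerset] at hB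
      have : Disjoint A B := Finset.disjoint_of_subset_right hB Finset.disjoint_sdiff
      exact Finset.union_sdiff_cancel_left this
    · intro V hV; rfl
  rw [hbij]
  have := Finset.sum_powerset_neg_one_pow_card (x := A' \ A)
  have hcast : ∑ B ∈ (A' \ A).powerset, (-1 : ℝ) ^ B.card =
      ((∑ B ∈ (A' \ A).powerset, (-1 : ℤ) ^ B.card : ℤ) : ℝ) := by
    push_cast; rfl
  rw [hcast, this]
  by_cases h : A' \ A = ∅
  · rw [if_pos h, if_pos (Finset.sdiff_eq_empty_iff_subset.mp h)]; norm_num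
  · rw [if_neg h, if_neg (fun hh => h (Finset.sdiff_eq_empty_iff_subset.mpr hh))]; norm_num

lemma card_filter_subtype {X : Type} [DecidableEq X] {V : Finset X}
    (p : {x // x ∈ V} → Prop) [DecidablePred p]
    (q : X → Prop) [DecidablePred q] (hpq : ∀ x : {x // x ∈ V}, p x ↔ q x.1) :
    (Finset.univ.filter p).card = (V.filter q).card := by
  refine Finset.card_bij (fun x _ => x.1) ?_ ?_ ?_
  · intro x hx
    simp only [Finset.mem_filter, Finset.mem_univ, true_and] at hx
    exact Finset.mem_filter.mpr ⟨x.2, (hpq x).mp hx⟩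
  · intro a ha b hb hab; exact Subtype.ext hab
  · intro y hy
    simp only [Finset.mem_filter] at hy
    exact ⟨⟨y, hy.1⟩, Finset.mem_filter.mpr ⟨Finset.mem_univ _, (hpq _).mpr hy.2⟩, rfl⟩

section Core

variable {X : Type} [Fintype X] [DecidableEq X] {l : ℕ}

set_option maxHeartbeats 1000000 in
lemma core (o₀ : Fin l) {𝒰 : Finset (Finset X)} {U : Finset X} (hU : U ∈ 𝒰)
    (d : ({x // x ∈ U} → Fin l) → ℝ) (s : {x // x ∈ U} → Fin l) :
    ∑ p ∈ pairS o₀ 𝒰, coeff o₀ U s p *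
      (if h : p.1 ⊆ U then marg h d p.2 else 0) = d s := by
  classical
  set sx : X → Fin l := fun x => if hx : x ∈ U then s ⟨x, hx⟩ else o₀ with hsx
  set A : Finset X := Finset.univ.filter (fun x => sx x ≠ o₀) with hA
  have hAU : A ⊆ U := by
    intro x hx
    by_contra hxU
    apply (Finset.mem_filter.mp hx).2
    simp only [hsx]; rw [dif_neg hxU]
  have key : ∀ r : {x // x ∈ U} → Fin l,
      (∑ p ∈ pairS o₀ 𝒰, if h : p.1 ⊆ U then
          (if restrSec h r = p.2 then coeff o₀ U s p else 0) else 0)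
        = if r = s then 1 else 0 := by
    intro r
    set rx : X → Fin l := fun x => if hx : x ∈ U then r ⟨x, hx⟩ else o₀ with hrx
    set A' : Finset X := Finset.univ.filter (fun x => rx x ≠ o₀) with hA'
    have hA'U : A' ⊆ U := by
      intro x hx
      by_contra hxU
      apply (Finset.mem_filter.mp hx).2
      simp only [hrx]; rw [dif_neg hxU]
    rw [pairS, Finset.sum_sigma]
    have inner : ∀ V ∈ Finset.univ.filter (fun V : Finset X => ∃ U' ∈ 𝒰, V ⊆ U'),
        (∑ t ∈ goodT o₀ V, if h : V ⊆ U then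
            (if restrSec h r = t then coeff o₀ U s ⟨V, t⟩ else 0) else 0)
        = if h : V ⊆ U then
            (if restrSec h r ∈ goodT o₀ V then coeff o₀ U s ⟨V, restrSec h r⟩ else 0) else 0 := by
      intro V _
      by_cases h : V ⊆ U
      · simp only [dif_pos h]
        exact Finset.sum_ite_eq (goodT o₀ V) (restrSec h r) (fun t => coeff o₀ U s ⟨V, t⟩)
      · simp [dif_neg h]
    rw [Finset.sum_congr rfl inner]
    by_cases hAgree : ∀ x ∈ A, rx x = sx x
    · -- agreement on A
      have hAA' : A ⊆ A' := by
        intro x hx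
        refine Finset.mem_filter.mpr ⟨Finset.mem_univ _, ?_⟩
        rw [hAgree x hx]
        exact (Finset.mem_filter.mp hx).2
      have perV : ∀ V ∈ Finset.univ.filter (fun V : Finset X => ∃ U' ∈ 𝒰, V ⊆ U'),
          (if h : V ⊆ U then
            (if restrSec h r ∈ goodT o₀ V then coeff o₀ U s ⟨V, restrSec h r⟩ else 0) else 0)
          = if A ⊆ V ∧ V ⊆ A' then (-1 : ℝ) ^ ((V \ A).card) else 0 := by
        intro V _
        by_cases h : V ⊆ U
        · have hgood : (restrSec h r ∈ goodT o₀ V) ↔ V ⊆ A' := by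
            simp only [goodT, Finset.mem_filter, Finset.mem_univ, true_and]
            constructor
            · intro hg x hx
              refine Finset.mem_filter.mpr ⟨Finset.mem_univ _, ?_⟩
              simp only [hrx]; rw [dif_pos (h hx)]
              exact hg ⟨x, hx⟩
            · intro hg x
              have := (Finset.mem_filter.mp (hg x.2)).2
              simp only [hrx] at this; rw [dif_pos (h x.2)] at this
              exact this
          have hcond1 : (∀ x : {x // x ∈ U}, s x ≠ o₀ → x.1 ∈ V) ↔ A ⊆ V := by
            constructor
            · intro hc x hx
              have hxU : x ∈ U := hAU hx
              have hs' : s ⟨x, hxU⟩ ≠ o₀ := by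
                have := (Finset.mem_filter.mp hx).2
                simp only [hsx] at this; rwa [dif_pos hxU] at this
              exact hc ⟨x, hxU⟩ hs'
            · intro hc x hx
              refine hc (Finset.mem_filter.mpr ⟨Finset.mem_univ _, ?_⟩)
              simp only [hsx]; rw [dif_pos x.2]
              exact hx
          have hcond2 : ∀ x : {x // x ∈ V}, restrSec h s x ≠ o₀ →
              restrSec h r x = restrSec h s x := by
            intro x hx
            have hxA : x.1 ∈ A := by
              refine Finset.mem_filter.mpr ⟨Finset.mem_univ _, ?_⟩
              simp only [hsx]; rw [dif_pos (h x.2)]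
              exact hx
            have := hAgree x.1 hxA
            simp only [hrx, hsx] at this
            rw [dif_pos (h x.2), dif_pos (h x.2)] at this
            exact this
          have hsign : (Finset.univ.filter
              (fun x : {x // x ∈ V} => restrSec h s x = o₀)).card = (V \ A).card := by
            rw [card_filter_subtype _ (fun x => sx x = o₀)
              (fun x => by simp only [hsx]; rw [dif_pos (h x.2)]; exact Iff.rfl)]
            congr 1
            ext x
            simp only [Finset.mem_filter, Finset.mem_sdiff, hA, Finset.mem_univ, true_and,
              not_not]
          rw [dif_pos h, coeff, dif_pos h]
          by_cases h3 : A ⊆ V ∧ V ⊆ A'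
          · rw [if_pos h3, if_pos (hgood.mpr h3.2), if_pos ⟨hcond1.mpr h3.1, hcond2⟩, hsign]
          · rw [if_neg h3]
            by_cases h1 : restrSec h r ∈ goodT o₀ V
            · rw [if_pos h1]
              by_cases h2 : (∀ x : {x // x ∈ U}, s x ≠ o₀ → x.1 ∈ V) ∧
                  (∀ x : {x // x ∈ V}, restrSec h s x ≠ o₀ → restrSec h r x = restrSec h s x)
              · exact absurd ⟨hcond1.mp h2.1, hgood.mp h1⟩ h3
              · rw [if_neg h2]
            · rw [if_neg h1]
        · rw [dif_neg h, if_neg (fun hc => h (hc.2.trans hA'U))]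
      rw [Finset.sum_congr rfl perV,
        comb _ A A' hAA' (fun V h1 h2 => Finset.mem_filter.mpr
          ⟨Finset.mem_univ _, ⟨U, hU, h2.trans hA'U⟩⟩)]
      by_cases hrs : r = s
      · rw [if_pos hrs, if_pos]
        intro x hx
        refine Finset.mem_filter.mpr ⟨Finset.mem_univ _, ?_⟩
        have := (Finset.mem_filter.mp hx).2
        simp only [hrx, hrs] at this
        simp only [hsx]
        exact this
      · rw [if_neg hrs, if_neg]
        intro hA'A
        apply hrs
        funext x
        by_cases hxA : x.1 ∈ A
        · have := hAgree x.1 hxA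
          simp only [hrx, hsx] at this
          rw [dif_pos x.2, dif_pos x.2] at this
          exact this
        · have hs0 : sx x.1 = o₀ := by
            by_contra hne
            exact hxA (Finset.mem_filter.mpr ⟨Finset.mem_univ _, hne⟩)
          have hr0 : rx x.1 = o₀ := by
            by_contra hne
            exact hxA (hA'A (Finset.mem_filter.mpr ⟨Finset.mem_univ _, hne⟩))
          simp only [hsx] at hs0
          simp only [hrx] at hr0
          rw [dif_pos x.2] at hs0 hr0
          rw [hr0, hs0]
    · -- no agreement on A : everything vanishes, and r ≠ s
      have hzero : ∀ V ∈ Finset.univ.filter (fun V : Finset X => ∃ U' ∈ 𝒰, V ⊆ U'),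
          (if h : V ⊆ U then
            (if restrSec h r ∈ goodT o₀ V then coeff o₀ U s ⟨V, restrSec h r⟩ else 0) else 0)
          = 0 := by
        intro V _
        by_cases h : V ⊆ U
        · rw [dif_pos h]
          by_cases h1 : restrSec h r ∈ goodT o₀ V
          · rw [if_pos h1, coeff, dif_pos h, if_neg]
            rintro ⟨h2, h3⟩
            apply hAgree
            intro x hx
            have hxU : x ∈ U := hAU hx
            have hs' : s ⟨x, hxU⟩ ≠ o₀ := by
              have := (Finset.mem_filter.mp hx).2
              simp only [hsx] at this; rwa [dif_pos hxU] at this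
            have hxV : x ∈ V := h2 ⟨x, hxU⟩ hs'
            have heq : restrSec h r ⟨x, hxV⟩ = restrSec h s ⟨x, hxV⟩ := h3 ⟨x, hxV⟩ hs'
            simp only [hrx, hsx]
            rw [dif_pos hxU, dif_pos hxU]
            exact heq
          · rw [if_neg h1]
        · rw [dif_neg h]
      rw [Finset.sum_eq_zero hzero, if_neg]
      intro hrs
      apply hAgree
      intro x hx
      simp only [hrx, hsx, hrs]
  -- now the main computation
  have step1 : ∀ p ∈ pairS o₀ 𝒰,
      coeff o₀ U s p * (if h : p.1 ⊆ U then marg h d p.2 else 0)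
      = ∑ x : {x // x ∈ U} → Fin l,
          (if h : p.1 ⊆ U then (if restrSec h x = p.2 then coeff o₀ U s p else 0) else 0) * d x := by
    intro p _
    by_cases h : p.1 ⊆ U
    · simp only [dif_pos h, marg, Finset.mul_sum]
      refine Finset.sum_congr rfl fun x _ => ?_
      split_ifs <;> ring
    · simp [dif_neg h]
  rw [Finset.sum_congr rfl step1, Finset.sum_comm]
  have step2 : ∀ x : {x // x ∈ U} → Fin l,
      (∑ p ∈ pairS o₀ 𝒰,
        (if h : p.1 ⊆ U then (if restrSec h x = p.2 then coeff o₀ U s p else 0) else 0) * d x)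
      = (if x = s then 1 else 0) * d x := by
    intro x
    rw [← Finset.sum_mul, key x]
  rw [Finset.sum_congr rfl (fun x _ => step2 x)]
  simp [ite_mul, Finset.sum_ite_eq']

end Core

/-- the span `W` of the vectors induced by No-Signalling empirical models
has dimension at most `D = Σ_{V ∈ Σ} (l-1)^{|V|}`, `Σ` the set of partial contexts. -/
theorem finrank_span_noSignalling_le {X : Type} [Fintype X] [DecidableEq X]
    (l : ℕ) (hl : 0 < l) (𝒰 : Finset (Finset X)) :
    Module.finrank ℝ (Submodule.span ℝ
      {w : (Σ U : {U // U ∈ 𝒰}, ({x // x ∈ U.1} → Fin l)) → ℝ |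
        ∃ e : (U : {U // U ∈ 𝒰}) → ({x // x ∈ U.1} → Fin l) → ℝ,
          IsEmpirical 𝒰 e ∧ NoSignalling 𝒰 e ∧ w = indVec 𝒰 e}) ≤
    ∑ V ∈ Finset.univ.filter (fun V : Finset X => ∃ U ∈ 𝒰, V ⊆ U), (l - 1) ^ V.card := by
  classical
  have hl1 : l - 1 < l := by omega
  set o₀ : Fin l := ⟨l - 1, hl1⟩ with ho₀
  set G : (Σ V : Finset X, ({x // x ∈ V} → Fin l)) →
      ((Σ U : {U // U ∈ 𝒰}, ({x // x ∈ U.1} → Fin l)) → ℝ) :=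
    fun p q => coeff o₀ q.1.1 q.2 p with hG
  set SP : Submodule ℝ ((Σ U : {U // U ∈ 𝒰}, ({x // x ∈ U.1} → Fin l)) → ℝ) :=
    Submodule.span ℝ (((pairS o₀ 𝒰).image G : Finset _) :
      Set ((Σ U : {U // U ∈ 𝒰}, ({x // x ∈ U.1} → Fin l)) → ℝ)) with hSP
  have hsub : ∀ w ∈ {w : (Σ U : {U // U ∈ 𝒰}, ({x // x ∈ U.1} → Fin l)) → ℝ |
        ∃ e : (U : {U // U ∈ 𝒰}) → ({x // x ∈ U.1} → Fin l) → ℝ,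
          IsEmpirical 𝒰 e ∧ NoSignalling 𝒰 e ∧ w = indVec 𝒰 e}, w ∈ SP := by
    rintro w ⟨e, hE, hNS, rfl⟩
    have hw : indVec 𝒰 e = ∑ p ∈ pairS o₀ 𝒰, wt 𝒰 e p • G p := by
      funext q
      obtain ⟨U, s⟩ := q
      have hc := core o₀ U.2 (eCond 𝒰 e U) s
      have happ : (∑ p ∈ pairS o₀ 𝒰, wt 𝒰 e p • G p) ⟨U, s⟩
          = ∑ p ∈ pairS o₀ 𝒰, wt 𝒰 e p * coeff o₀ U.1 s p := by
        rw [Finset.sum_apply]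
        rfl
      rw [happ, show (indVec 𝒰 e ⟨U, s⟩) = eCond 𝒰 e U s from rfl, ← hc]
      refine Finset.sum_congr rfl fun p _ => ?_
      by_cases h : p.1 ⊆ U.1
      · rw [dif_pos h, wt_eq hNS U h, mul_comm]
      · rw [dif_neg h, coeff, dif_neg h]; simp
    rw [hw]
    exact Submodule.sum_mem _ fun p hp => Submodule.smul_mem _ _
      (Submodule.subset_span (Finset.mem_coe.mpr (Finset.mem_image_of_mem G hp)))
  have h1 := Submodule.finrank_mono (M := ((Σ U : {U // U ∈ 𝒰}, ({x // x ∈ U.1} → Fin l)) → ℝ)) (Submodule.span_le.mpr hsub)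
  have h2 : Module.finrank ℝ SP ≤ ((pairS o₀ 𝒰).image G).card :=
    finrank_span_finset_le_card _
  have h3 : ((pairS o₀ 𝒰).image G).card ≤ (pairS o₀ 𝒰).card := Finset.card_image_le
  have h4 : (pairS o₀ 𝒰).card =
      ∑ V ∈ Finset.univ.filter (fun V : Finset X => ∃ U ∈ 𝒰, V ⊆ U), (l - 1) ^ V.card := by
    rw [pairS, Finset.card_sigma]
    exact Finset.sum_congr (by ext V; simp) (fun V _ => goodT_card o₀ V)
  omega
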